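/- Let ω, σ₀, μ₀ > 0 and let ξ, ρ₁, ρ₂ ∈ ℝ³ satisfy |ρ₁| = |ρ₂| = 1 and ρ₁·ρ₂ = ρ₁·ξ = ρ₂·ξ = 0. For τ > 0 let s ∈ ℂ be the principal square root of 1 − |ξ|²/(4τ²) + iωσ₀μ₀/τ² (which is nonzero since its imaginary part is positive), and define ζ¹ := ξ/2 + iτρ₂ + τ s ρ₁ ∈ ℂ³ and ζ² := −ξ/2 + iτρ₂ + τ s ρ₁ ∈ ℂ³ (real vectors viewed inside ℂ³). Then ζ¹ − ζ² = ξ, and ζ¹·ζ¹ = ζ²·ζ² = iωσ₀μ₀, where for w ∈ ℂ³, w·w := Σⱼ wⱼ² is the bilinear dot product (no conjugation). -/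

import Mathlib

/-- For `ω, σ₀, μ₀ > 0`, an orthonormal pair `ρ₁, ρ₂ ⟂ ξ` in `ℝ³` and `τ > 0`, with `s` the
principal square root of `1 − |ξ|²/(4τ²) + iωσ₀μ₀/τ²`, the vectors
`ζ¹ = ξ/2 + iτρ₂ + τsρ₁` and `ζ² = −ξ/2 + iτρ₂ + τsρ₁` satisfy `ζ¹ − ζ² = ξ` and
`ζ¹·ζ¹ = ζ²·ζ² = iωσ₀μ₀` (bilinear dot product). -/
theorem cgo_phase_vectors (ω σ₀ μ₀ : ℝ) (hω : 0 < ω) (hσ₀ : 0 < σ₀) (hμ₀ : 0 < μ₀)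
    (ξ ρ₁ ρ₂ : Fin 3 → ℝ)
    (hρ₁ : ∑ j, ρ₁ j ^ 2 = 1) (hρ₂ : ∑ j, ρ₂ j ^ 2 = 1)
    (hρ₁ρ₂ : ∑ j, ρ₁ j * ρ₂ j = 0) (hρ₁ξ : ∑ j, ρ₁ j * ξ j = 0)
    (hρ₂ξ : ∑ j, ρ₂ j * ξ j = 0) (τ : ℝ) (hτ : 0 < τ) :
    ∀ s ζ₁ ζ₂,
      s = ((1 : ℂ) - ((∑ j, ξ j ^ 2 : ℝ) : ℂ) / (4 * (τ : ℂ) ^ 2)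
            + Complex.I * (ω : ℂ) * (σ₀ : ℂ) * (μ₀ : ℂ) / (τ : ℂ) ^ 2) ^ ((1 : ℂ) / 2) →
      ζ₁ = (fun j : Fin 3 => (ξ j : ℂ) / 2 + Complex.I * (τ : ℂ) * (ρ₂ j : ℂ)
              + (τ : ℂ) * s * (ρ₁ j : ℂ)) →
      ζ₂ = (fun j : Fin 3 => -(ξ j : ℂ) / 2 + Complex.I * (τ : ℂ) * (ρ₂ j : ℂ)
              + (τ : ℂ) * s * (ρ₁ j : ℂ)) →
      (∀ j, ζ₁ j - ζ₂ j = (ξ j : ℂ)) ∧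
      (∑ j, ζ₁ j ^ 2 = Complex.I * (ω : ℂ) * (σ₀ : ℂ) * (μ₀ : ℂ)) ∧
      (∑ j, ζ₂ j ^ 2 = Complex.I * (ω : ℂ) * (σ₀ : ℂ) * (μ₀ : ℂ)) := by
  intro s ζ₁ ζ₂ hs h1 h2
  have hτ0 : (τ : ℂ) ≠ 0 := by exact_mod_cast hτ.ne'
  set z : ℂ := (1 : ℂ) - ((∑ j, ξ j ^ 2 : ℝ) : ℂ) / (4 * (τ : ℂ) ^ 2)
      + Complex.I * (ω : ℂ) * (σ₀ : ℂ) * (μ₀ : ℂ) / (τ : ℂ) ^ 2 with hzdef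
  have hconv : z = Complex.ofReal (1 - (∑ j, ξ j ^ 2) / (4 * τ ^ 2))
      + Complex.ofReal (ω * σ₀ * μ₀ / τ ^ 2) * Complex.I := by
    rw [hzdef]; push_cast; ring
  have him : z.im = ω * σ₀ * μ₀ / τ ^ 2 := by
    rw [hconv]
    simp only [Complex.add_im, Complex.mul_im, Complex.ofReal_im, Complex.ofReal_re,
      Complex.I_im, Complex.I_re]
    ring
  have hz : z ≠ 0 := by
    have h0 : z.im ≠ 0 := by rw [him]; positivity
    exact fun h => h0 (by rw [h]; simp)
  have hs2 : s ^ 2 = z := by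
    rw [hs, sq, ← Complex.cpow_add _ _ hz]
    norm_num
  have hs2' : (τ : ℂ) ^ 2 * s ^ 2
      = (τ : ℂ) ^ 2 - ((∑ j, ξ j ^ 2 : ℝ) : ℂ) / 4
        + Complex.I * (ω : ℂ) * (σ₀ : ℂ) * (μ₀ : ℂ) := by
    rw [hs2, hzdef]
    field_simp
  have hI : Complex.I ^ 2 = -1 := Complex.I_sq
  have H1 : ((ρ₁ 0 : ℂ)) ^ 2 + (ρ₁ 1 : ℂ) ^ 2 + (ρ₁ 2 : ℂ) ^ 2 = 1 := by
    exact_mod_cast congrArg (fun x : ℝ => (x : ℂ)) (by simpa [Fin.sum_univ_three] using hρ₁)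
  have H2 : ((ρ₂ 0 : ℂ)) ^ 2 + (ρ₂ 1 : ℂ) ^ 2 + (ρ₂ 2 : ℂ) ^ 2 = 1 := by
    exact_mod_cast congrArg (fun x : ℝ => (x : ℂ)) (by simpa [Fin.sum_univ_three] using hρ₂)
  have H3 : (ρ₁ 0 : ℂ) * (ρ₂ 0 : ℂ) + (ρ₁ 1 : ℂ) * (ρ₂ 1 : ℂ) + (ρ₁ 2 : ℂ) * (ρ₂ 2 : ℂ) = 0 := by
    exact_mod_cast congrArg (fun x : ℝ => (x : ℂ)) (by simpa [Fin.sum_univ_three] using hρ₁ρ₂)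
  have H4 : (ρ₁ 0 : ℂ) * (ξ 0 : ℂ) + (ρ₁ 1 : ℂ) * (ξ 1 : ℂ) + (ρ₁ 2 : ℂ) * (ξ 2 : ℂ) = 0 := by
    exact_mod_cast congrArg (fun x : ℝ => (x : ℂ)) (by simpa [Fin.sum_univ_three] using hρ₁ξ)
  have H5 : (ρ₂ 0 : ℂ) * (ξ 0 : ℂ) + (ρ₂ 1 : ℂ) * (ξ 1 : ℂ) + (ρ₂ 2 : ℂ) * (ξ 2 : ℂ) = 0 := by
    exact_mod_cast congrArg (fun x : ℝ => (x : ℂ)) (by simpa [Fin.sum_univ_three] using hρ₂ξ)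
  have Hξ : ((∑ j, ξ j ^ 2 : ℝ) : ℂ) = (ξ 0 : ℂ) ^ 2 + (ξ 1 : ℂ) ^ 2 + (ξ 2 : ℂ) ^ 2 := by
    push_cast [Fin.sum_univ_three]
    ring
  rw [Hξ] at hs2'
  subst h1 h2
  refine ⟨fun j => by ring, ?_, ?_⟩
  · simp only [Fin.sum_univ_three]
    linear_combination hs2' + (τ:ℂ) ^ 2 * s ^ 2 * H1 + Complex.I ^ 2 * (τ:ℂ) ^ 2 * H2
      + (τ:ℂ) ^ 2 * hI + 2 * Complex.I * (τ:ℂ) ^ 2 * s * H3 + (τ:ℂ) * s * H4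
      + Complex.I * (τ:ℂ) * H5
  · simp only [Fin.sum_univ_three]
    linear_combination hs2' + (τ:ℂ) ^ 2 * s ^ 2 * H1 + Complex.I ^ 2 * (τ:ℂ) ^ 2 * H2
      + (τ:ℂ) ^ 2 * hI + 2 * Complex.I * (τ:ℂ) ^ 2 * s * H3 - (τ:ℂ) * s * H4
      - Complex.I * (τ:ℂ) * H5
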